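/- Let B be a commutative O-algebra with π-derivation δ and associated Frobenius lift φ, and assume φ(π·1_B) = π·1_B. Then for every m ≥ 1 there exists a centered polynomial P ∈ O[T_0, …, T_{m−1}] such that for all a ∈ B: φ^m(a) = π^m·δ^m(a) + P(a, δ(a), …, δ^{m−1}(a)), where φ^m and δ^m denote m-fold iterates and P is evaluated in B via the structure map. -/

import Mathlib

open MvPolynomial

/-- A `π`-derivation on a commutative `O`-algebra `B`, relative to the polynomial
`C ∈ O[X,Y]` satisfying `π·C = X^q + Y^q - (X+Y)^q`. -/
def IsPiDeriv {O : Type*} [CommRing O] (π : O) (q : ℕ) (C : MvPolynomial (Fin 2) O)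
    {B : Type*} [CommRing B] [Algebra O B] (δ : B → B) : Prop :=
  δ 1 = 0 ∧
  (∀ x y : B, δ (x + y) = δ x + δ y + MvPolynomial.aeval ![x, y] C) ∧
  (∀ x y : B, δ (x * y) = x ^ q * δ y + y ^ q * δ x + algebraMap O B π * δ x * δ y)

/-- A polynomial is centered if it vanishes when all variables are set to `0`. -/
def Centered {R : Type*} [CommRing R] {σ : Type*} (F : MvPolynomial σ R) : Prop :=
  MvPolynomial.eval (fun _ => (0 : R)) F = 0

/-- `φ^m(a) = π^m·δ^m(a) + P(a, δ(a), …, δ^{m-1}(a))` for a centered polynomial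
`P` over `O`. -/
theorem frobenius_iterate_eq_pi_pow_deriv_add_centered
    {O B : Type*} [CommRing O] [CommRing B] [Algebra O B]
    (π : O) (hπ : π ∈ nonZeroDivisors O) (q : ℕ) (hq : 1 ≤ q)
    (C : MvPolynomial (Fin 2) O)
    (hC : MvPolynomial.C π * C = X 0 ^ q + X 1 ^ q - (X 0 + X 1) ^ q)
    (δ : B → B) (hδ : IsPiDeriv π q C δ)
    (φ : B → B) (hφ : ∀ x : B, φ x = x ^ q + algebraMap O B π * δ x)
    (hfix : φ (algebraMap O B π) = algebraMap O B π)
    (m : ℕ) (hm : 1 ≤ m) :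
    ∃ P : MvPolynomial (Fin m) O, Centered P ∧
      ∀ a : B, φ^[m] a =
        algebraMap O B π ^ m * δ^[m] a +
          MvPolynomial.aeval (fun i : Fin m => δ^[(i : ℕ)] a) P := by
  obtain ⟨hδ1, hδadd, hδmul⟩ := hδ
  set u : B := algebraMap O B π with hu
  have hq' : q ≠ 0 := by omega
  have hCval : ∀ x y : B, u * MvPolynomial.aeval ![x, y] C = x ^ q + y ^ q - (x + y) ^ q := by
    intro x y
    have h := congrArg (MvPolynomial.aeval (R := O) (S₁ := B) ![x, y]) hC
    simpa [map_mul, map_add, map_sub, map_pow, aeval_C, aeval_X,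
      Algebra.smul_def] using h
  have φadd : ∀ x y : B, φ (x + y) = φ x + φ y := by
    intro x y
    rw [hφ, hφ, hφ, hδadd]
    have := hCval x y
    linear_combination this
  have φmul : ∀ x y : B, φ (x * y) = φ x * φ y := by
    intro x y
    rw [hφ, hφ, hφ, hδmul, mul_pow]
    ring
  have φone : φ 1 = 1 := by rw [hφ, hδ1, one_pow, mul_zero, add_zero]
  let Φ : B →+* B := RingHom.mk' ⟨⟨φ, φone⟩, φmul⟩ φadd
  have hΦ : ∀ x, Φ x = φ x := fun _ => rfl
  let A := MvPolynomial Unit ℤ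
  let g : A →+* B := eval₂Hom (Int.castRingHom B) fun _ => u
  have hcomp : Φ.comp g = g := by
    apply MvPolynomial.ringHom_ext
    · intro r
      simp [g, map_intCast]
    · intro i
      simpa [g, hΦ] using hfix
  have key : ∀ n : ℕ, ∃ P : MvPolynomial (Fin (n + 1)) A,
      eval₂Hom (RingHom.id A) (fun _ : Fin (n + 1) => (0 : A)) P = 0 ∧
      ∀ a : B, φ^[n + 1] a = u ^ (n + 1) * δ^[n + 1] a
        + eval₂Hom g (fun i : Fin (n + 1) => δ^[(i : ℕ)] a) P := by
    intro n
    induction n with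
    | zero =>
      refine ⟨X 0 ^ q, ?_, ?_⟩
      · simp [zero_pow hq']
      · intro a
        simp only [zero_add, Function.iterate_one, pow_one, map_pow, eval₂Hom_X',
          Fin.val_zero, Function.iterate_zero, id_eq]
        rw [hφ]
        ring
    | succ n ih =>
      obtain ⟨P, hP0, hP⟩ := ih
      let f : Fin (n + 1) → MvPolynomial (Fin (n + 2)) A :=
        fun i => X i.castSucc ^ q + MvPolynomial.C (X ()) * X i.succ
      refine ⟨MvPolynomial.C (X () ^ (n + 1)) * X (Fin.last (n + 1)) ^ q + bind₁ f P,
        ?_, ?_⟩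
      · have hfz : (fun i : Fin (n + 1) =>
            eval₂Hom (RingHom.id A) (fun _ : Fin (n + 2) => (0 : A)) (f i))
            = fun _ => (0 : A) := by
          funext i
          simp [f, zero_pow hq', eval₂Hom_X', eval₂Hom_C]
        rw [map_add, eval₂Hom_bind₁, hfz, hP0, add_zero]
        simp only [map_mul, map_pow, eval₂Hom_X', eval₂Hom_C]
        rw [zero_pow hq', mul_zero]
      · intro a
        have step : φ^[n + 2] a = φ (φ^[n + 1] a) := Function.iterate_succ_apply' φ (n + 1) a
        have hΦu : Φ u = u := hfix
        have hΦδ : Φ (δ^[n + 1] a) = (δ^[n + 1] a) ^ q + u * δ^[n + 2] a := by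
          rw [hΦ, hφ, ← Function.iterate_succ_apply' δ (n + 1) a]
        have hfun : (fun i : Fin (n + 1) => Φ (δ^[(i : ℕ)] a))
            = fun i : Fin (n + 1) =>
              eval₂Hom g (fun j : Fin (n + 2) => δ^[(j : ℕ)] a) (f i) := by
          funext i
          simp only [f, map_add, map_mul, map_pow, eval₂Hom_X', eval₂Hom_C]
          have hgX : g (X () : A) = u := eval₂Hom_X' _ _ _
          rw [hgX, hΦ, hφ]
          simp [Fin.coe_castSucc, Fin.val_succ, Function.iterate_succ_apply' δ (i : ℕ) a]
        have hbind : Φ (eval₂Hom g (fun i : Fin (n + 1) => δ^[(i : ℕ)] a) P)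
            = eval₂Hom g (fun i : Fin (n + 2) => δ^[(i : ℕ)] a) (bind₁ f P) := by
          rw [map_eval₂Hom, eval₂Hom_bind₁, hcomp, hfun]
        have hgC : eval₂Hom g (fun i : Fin (n + 2) => δ^[(i : ℕ)] a)
            (MvPolynomial.C (X () ^ (n + 1)) * X (Fin.last (n + 1)) ^ q)
            = u ^ (n + 1) * (δ^[n + 1] a) ^ q := by
          have hgX : g (X () : A) = u := eval₂Hom_X' _ _ _
          simp only [map_mul, map_pow, eval₂Hom_X', eval₂Hom_C, hgX, Fin.val_last]
        rw [step, hP a, ← hΦ, map_add, map_mul, map_pow, hΦu, hΦδ, hbind, map_add, hgC]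
        ring
  obtain ⟨k, rfl⟩ : ∃ k, m = k + 1 := ⟨m - 1, by omega⟩
  obtain ⟨P, hP0, hP⟩ := key k
  let ψ : A →+* O := eval₂Hom (Int.castRingHom O) fun _ => π
  have hgψ : (algebraMap O B).comp ψ = g := by
    apply MvPolynomial.ringHom_ext
    · intro r
      simp [ψ, g, map_intCast]
    · intro i
      simp [ψ, g, hu]
  refine ⟨MvPolynomial.map ψ P, ?_, ?_⟩
  · unfold Centered
    rw [eval_map]
    have h := eval₂_comp_left ψ (RingHom.id A) (fun _ : Fin (k + 1) => (0 : A)) P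
    rw [RingHom.comp_id] at h
    have h2 : (ψ ∘ fun _ : Fin (k + 1) => (0 : A)) = fun _ => (0 : O) := by
      funext i
      simp
    rw [h2] at h
    rw [← h]
    have h3 : MvPolynomial.eval₂ (RingHom.id A) (fun _ : Fin (k + 1) => (0 : A)) P = 0 := hP0
    rw [h3, map_zero]
  · intro a
    rw [hP a]
    congr 1
    symm
    rw [aeval_def, eval₂_map, hgψ]
    rfl
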